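/- Let F : Γ₊ → ℝ be C², symmetric, positively 1-homogeneous, normalized by F(1,…,1) = 1, with positive first derivatives. Define φ(κ) = (Σᵢ Fᵢ(κ)) |κ|² − F(κ) (Σᵢ κᵢ), where |κ|² = Σᵢ κᵢ². Then φ vanishes to second order on the diagonal: φ(t,…,t) = 0 and Dφ(t,…,t) = 0 for all t > 0, and consequently for κ in any compact subset of Γ₊ there is C > 0 with φ(κ) ≤ C Σ_{i<j} (κᵢ − κⱼ)². -/

import Mathlib

open Real Finset

private lemma dvqb_isOpen_gamma {n : ℕ} : IsOpen {κ : Fin n → ℝ | ∀ i, 0 < κ i} := by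
  have h : {κ : Fin n → ℝ | ∀ i, 0 < κ i} = ⋂ i, (fun κ : Fin n → ℝ => κ i) ⁻¹' Set.Ioi 0 := by
    ext κ; simp
  rw [h]
  exact isOpen_iInter_of_finite fun i => (continuous_apply i).isOpen_preimage _ isOpen_Ioi

private lemma dvqb_convex_gamma {n : ℕ} : Convex ℝ {κ : Fin n → ℝ | ∀ i, 0 < κ i} := by
  have h : {κ : Fin n → ℝ | ∀ i, 0 < κ i} = Set.pi Set.univ (fun _ => Set.Ioi (0:ℝ)) := by
    ext κ; simp [Set.mem_pi]
  rw [h]; exact convex_pi fun i _ => convex_Ioi 0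

private lemma dvqb_pair_split {n : ℕ} (a : Fin n → Fin n → ℝ) (hdiag : ∀ i, a i i = 0) :
    ∑ i, ∑ j, a i j
      = ∑ i, ∑ j ∈ Finset.univ.filter (fun j => i < j), (a i j + a j i) := by
  have h1 : ∀ i : Fin n, ∑ j, a i j
      = (∑ j ∈ Finset.univ.filter (fun j => i < j), a i j)
        + ∑ j ∈ Finset.univ.filter (fun j => j < i), a i j := by
    intro i
    rw [← Finset.sum_filter_add_sum_filter_not Finset.univ (fun j => i < j) (a i)]
    congr 1
    refine (Finset.sum_subset ?_ ?_).symm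
    · intro j hj
      simp only [Finset.mem_filter, Finset.mem_univ, true_and] at hj ⊢
      exact not_lt_of_gt hj
    · intro j hj hj'
      simp only [Finset.mem_filter, Finset.mem_univ, true_and, not_lt] at hj hj'
      have h2 : j = i := le_antisymm hj hj'
      rw [h2, hdiag]
  calc ∑ i, ∑ j, a i j
      = (∑ i, ∑ j ∈ Finset.univ.filter (fun j => i < j), a i j)
        + ∑ i, ∑ j ∈ Finset.univ.filter (fun j => j < i), a i j := by
        rw [← Finset.sum_add_distrib]; exact Finset.sum_congr rfl fun i _ => h1 i
    _ = (∑ i, ∑ j ∈ Finset.univ.filter (fun j => i < j), a i j)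
        + ∑ i, ∑ j ∈ Finset.univ.filter (fun j => i < j), a j i := by
        congr 1
        exact Finset.sum_comm' (by intro x y; simp [and_comm])
    _ = _ := by
        rw [← Finset.sum_add_distrib]
        exact Finset.sum_congr rfl fun i _ => Finset.sum_add_distrib.symm

set_option maxHeartbeats 3200000 in
theorem diagonal_vanishing_quadratic_bound (n : ℕ) (hn : 1 ≤ n)
    (Γ : Set (Fin n → ℝ)) (hΓ : Γ = {κ | ∀ i, 0 < κ i})
    (F : (Fin n → ℝ) → ℝ)
    (hF2 : ContDiffOn ℝ 2 F Γ)
    (hsym : ∀ κ ∈ Γ, ∀ σ : Equiv.Perm (Fin n), F (κ ∘ σ) = F κ)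
    (hhom : ∀ κ ∈ Γ, ∀ lam : ℝ, 0 < lam → F (lam • κ) = lam * F κ)
    (hnorm : F (fun _ => 1) = 1)
    (hpos : ∀ κ ∈ Γ, ∀ i, 0 < fderiv ℝ F κ (Pi.single i 1))
    (φ : (Fin n → ℝ) → ℝ)
    (hφ : ∀ κ, φ κ = (∑ i, fderiv ℝ F κ (Pi.single i 1)) * (∑ i, κ i ^ 2)
      - F κ * (∑ i, κ i)) :
    (∀ t : ℝ, 0 < t → φ (fun _ => t) = 0 ∧ fderiv ℝ φ (fun _ => t) = 0) ∧
    (∀ K : Set (Fin n → ℝ), IsCompact K → K ⊆ Γ → ∃ C : ℝ, 0 < C ∧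
      ∀ κ ∈ K, φ κ ≤ C * ∑ i, ∑ j ∈ Finset.univ.filter (fun j => i < j),
        (κ i - κ j) ^ 2) := by
  have hopen : IsOpen Γ := hΓ ▸ (by
    have h : {κ : Fin n → ℝ | ∀ i, 0 < κ i}
        = ⋂ i, (fun κ : Fin n → ℝ => κ i) ⁻¹' Set.Ioi 0 := by ext κ; simp
    rw [h]
    exact isOpen_iInter_of_finite fun i => (continuous_apply i).isOpen_preimage _ isOpen_Ioi)
  have hconv : Convex ℝ Γ := hΓ ▸ (by
    have h : {κ : Fin n → ℝ | ∀ i, 0 < κ i} = Set.pi Set.univ (fun _ => Set.Ioi (0:ℝ)) := by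
      ext κ; simp [Set.mem_pi]
    rw [h]; exact convex_pi fun i _ => convex_Ioi 0)
  have hsmul_mem : ∀ κ ∈ Γ, ∀ l : ℝ, 0 < l → l • κ ∈ Γ := by
    intro κ hκ l hl
    rw [hΓ] at *
    intro i
    simpa using mul_pos hl (hκ i)
  have hperm_mem : ∀ κ ∈ Γ, ∀ σ : Equiv.Perm (Fin n), κ ∘ σ ∈ Γ := by
    intro κ hκ σ
    rw [hΓ] at *
    exact fun i => hκ (σ i)
  have hdiff : ∀ κ ∈ Γ, DifferentiableAt ℝ F κ := fun κ hκ =>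
    (hF2.contDiffAt (hopen.mem_nhds hκ)).differentiableAt (by norm_num)
  have hC1 : ContDiffOn ℝ 1 (fderiv ℝ F) Γ := hF2.fderiv_of_isOpen hopen (by norm_num)
  have hGdiff : ∀ κ ∈ Γ, DifferentiableAt ℝ (fderiv ℝ F) κ := fun κ hκ =>
    (hC1.contDiffAt (hopen.mem_nhds hκ)).differentiableAt one_ne_zero
  have hGcont : ContinuousOn (fderiv ℝ F) Γ := hC1.continuousOn
  have hG2cont : ContinuousOn (fderiv ℝ (fderiv ℝ F)) Γ :=
    hC1.continuousOn_fderiv_of_isOpen hopen le_rfl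
  -- Euler's relation
  have heuler : ∀ κ ∈ Γ, fderiv ℝ F κ κ = F κ := by
    intro κ hκ
    have hin : HasDerivAt (fun l : ℝ => l • κ) κ 1 := by
      simpa using (hasDerivAt_id (1:ℝ)).smul_const κ
    have hF' : HasFDerivAt F (fderiv ℝ F κ) ((fun l : ℝ => l • κ) 1) := by
      simpa using (hdiff κ hκ).hasFDerivAt
    have h1 : HasDerivAt (fun l : ℝ => F (l • κ)) (fderiv ℝ F κ κ) 1 := by
      exact hF'.comp_hasDerivAt 1 hin
    have h3 : HasDerivAt (fun l : ℝ => l * F κ) (F κ) 1 := by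
      simpa using (hasDerivAt_id (1:ℝ)).mul_const (F κ)
    have h2 : HasDerivAt (fun l : ℝ => F (l • κ)) (F κ) 1 := by
      refine h3.congr_of_eventuallyEq ?_
      filter_upwards [isOpen_Ioi.mem_nhds (show (0:ℝ) < 1 by norm_num)] with l hl
      exact hhom κ hκ l hl
    exact h1.unique h2
  -- 0-homogeneity of the derivative
  have hhom0 : ∀ κ ∈ Γ, ∀ l : ℝ, 0 < l → fderiv ℝ F (l • κ) = fderiv ℝ F κ := by
    intro κ hκ l hl
    have hmem := hsmul_mem κ hκ l hl
    have hL : HasFDerivAt (fun x : Fin n → ℝ => l • x)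
        (l • ContinuousLinearMap.id ℝ (Fin n → ℝ)) κ := (hasFDerivAt_id κ).const_smul l
    have h1 : HasFDerivAt (fun x : Fin n → ℝ => F (l • x))
        ((fderiv ℝ F (l • κ)).comp (l • ContinuousLinearMap.id ℝ (Fin n → ℝ))) κ :=
      (hdiff _ hmem).hasFDerivAt.comp κ hL
    have h3 : HasFDerivAt (fun x : Fin n → ℝ => l * F x) (l • fderiv ℝ F κ) κ :=
      (hdiff κ hκ).hasFDerivAt.const_mul l
    have h2 : HasFDerivAt (fun x : Fin n → ℝ => F (l • x)) (l • fderiv ℝ F κ) κ := by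
      refine h3.congr_of_eventuallyEq ?_
      filter_upwards [hopen.mem_nhds hκ] with x hx
      exact hhom x hx l hl
    have h4 := h1.unique h2
    ext v
    have h5 := congrArg (fun (T : (Fin n → ℝ) →L[ℝ] ℝ) => T v) h4
    simp only [ContinuousLinearMap.comp_apply, ContinuousLinearMap.smul_apply,
      ContinuousLinearMap.coe_id', id_eq, map_smul, smul_eq_mul] at h5
    exact mul_left_cancel₀ hl.ne' h5
  -- permutation covariance of the derivative
  have hperm' : ∀ κ ∈ Γ, ∀ σ : Equiv.Perm (Fin n), ∀ i,
      fderiv ℝ F κ (Pi.single i 1) = fderiv ℝ F (κ ∘ σ) (Pi.single (σ.symm i) 1) := by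
    intro κ hκ σ i
    set L : (Fin n → ℝ) →L[ℝ] (Fin n → ℝ) :=
      LinearMap.toContinuousLinearMap (LinearMap.funLeft ℝ ℝ σ) with hLdef
    have hLapp : ∀ x : Fin n → ℝ, L x = x ∘ σ := fun x => rfl
    have h1 : HasFDerivAt (fun x : Fin n → ℝ => F (x ∘ σ))
        ((fderiv ℝ F (κ ∘ σ)).comp L) κ := by
      have hc := (hdiff _ (hperm_mem κ hκ σ)).hasFDerivAt.comp κ (L.hasFDerivAt (x := κ))
      exact hc
    have h2 : HasFDerivAt (fun x : Fin n → ℝ => F (x ∘ σ)) (fderiv ℝ F κ) κ := by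
      refine (hdiff κ hκ).hasFDerivAt.congr_of_eventuallyEq ?_
      filter_upwards [hopen.mem_nhds hκ] with x hx
      exact hsym x hx σ
    have h4 := h2.unique h1
    have h5 := congrArg (fun (T : (Fin n → ℝ) →L[ℝ] ℝ) => T (Pi.single i 1)) h4
    simp only [ContinuousLinearMap.comp_apply] at h5
    rw [h5]
    congr 1
    funext k
    simp only [hLapp, Function.comp_apply, Pi.single_apply]
    by_cases hk : σ k = i
    · simp [hk, (Equiv.symm_apply_eq σ).mpr hk.symm]
    · have : ¬ k = σ.symm i := fun h => hk (by rw [h]; simp)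
      simp [hk, this]
  -- expansion of the derivative in coordinates
  have happly : ∀ (κ v : Fin n → ℝ),
      fderiv ℝ F κ v = ∑ i, v i * fderiv ℝ F κ (Pi.single i 1) := by
    intro κ v
    have hv : v = ∑ i, v i • (Pi.single i 1 : Fin n → ℝ) := by
      have h := Finset.univ_sum_single v
      rw [← h]
      exact Finset.sum_congr rfl fun i _ => by
        funext k
        simp [Pi.single_apply, mul_ite]
    conv_lhs => rw [hv]
    rw [map_sum]
    exact Finset.sum_congr rfl fun i _ => by rw [map_smul]; rfl
  constructor
  · intro t ht
    have hone : (fun _ : Fin n => (1:ℝ)) ∈ Γ := by rw [hΓ]; intro i; norm_num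
    have hx : (fun _ : Fin n => t) ∈ Γ := by rw [hΓ]; intro i; exact ht
    have hxs : (fun _ : Fin n => t) = t • (fun _ : Fin n => (1:ℝ)) := by
      funext k; simp
    have hFx : F (fun _ => t) = t := by rw [hxs, hhom _ hone t ht, hnorm, mul_one]
    have hsum_single : (∑ i, (Pi.single i 1 : Fin n → ℝ)) = fun _ => (1:ℝ) :=
      Finset.univ_sum_single (fun _ : Fin n => (1:ℝ))
    have hS : ∀ κ : Fin n → ℝ, (∑ i, fderiv ℝ F κ (Pi.single i 1)) = fderiv ℝ F κ (fun _ => 1) := by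
      intro κ; rw [← map_sum, hsum_single]
    have hGx1 : fderiv ℝ F (fun _ : Fin n => t) (fun _ => 1) = 1 := by
      have he := heuler _ hx
      rw [hFx] at he
      have hsm := (fderiv ℝ F (fun _ : Fin n => t)).map_smul t (fun _ : Fin n => (1:ℝ))
      rw [← hxs] at hsm
      rw [hsm, smul_eq_mul] at he
      exact mul_left_cancel₀ ht.ne' (he.trans (mul_one t).symm)
    have hfc : ∀ i j : Fin n, fderiv ℝ F (fun _ : Fin n => t) (Pi.single i 1)
        = fderiv ℝ F (fun _ : Fin n => t) (Pi.single j 1) := by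
      intro i j
      have h := hperm' _ hx (Equiv.swap i j) i
      have hxσ : ((fun _ : Fin n => t) ∘ (Equiv.swap i j)) = fun _ : Fin n => t := rfl
      rw [hxσ] at h
      simpa [Equiv.symm_swap, Equiv.swap_apply_left] using h
    obtain ⟨i0⟩ : Nonempty (Fin n) := ⟨⟨0, hn⟩⟩
    set c : ℝ := fderiv ℝ F (fun _ : Fin n => t) (Pi.single i0 1) with hcdef
    have hsumc : ∑ i : Fin n, fderiv ℝ F (fun _ : Fin n => t) (Pi.single i 1) = (n:ℝ) * c := by
      rw [Finset.sum_congr rfl fun i (_ : i ∈ Finset.univ) => hfc i i0]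
      simp [Finset.card_univ, nsmul_eq_mul, ← hcdef]
    have hcn : (n:ℝ) * c = 1 := by rw [← hsumc, hS, hGx1]
    have hGxv : ∀ v : Fin n → ℝ, fderiv ℝ F (fun _ : Fin n => t) v = c * ∑ i, v i := by
      intro v
      rw [happly, Finset.mul_sum]
      exact Finset.sum_congr rfl fun i _ => by rw [hfc i i0, ← hcdef, mul_comm]
    constructor
    · rw [hφ, hS, hGx1, hFx]
      simp [Finset.sum_const, Finset.card_univ, nsmul_eq_mul]
      ring
    · -- derivative vanishes
      have hDGd : HasFDerivAt (fderiv ℝ F) (fderiv ℝ (fderiv ℝ F) (fun _ : Fin n => t))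
          (fun _ : Fin n => t) := (hGdiff _ hx).hasFDerivAt
      have hkey : fderiv ℝ (fderiv ℝ F) (fun _ : Fin n => t) (fun _ : Fin n => (1:ℝ)) = 0 := by
        have hpath : HasDerivAt (fun s : ℝ => (fun _ : Fin n => t) + s • (fun _ : Fin n => (1:ℝ)))
            (fun _ : Fin n => (1:ℝ)) 0 := by
          simpa using ((hasDerivAt_id (0:ℝ)).smul_const (fun _ : Fin n => (1:ℝ))).const_add
            (fun _ : Fin n => t)
        have hF' : HasFDerivAt (fderiv ℝ F) (fderiv ℝ (fderiv ℝ F) (fun _ : Fin n => t))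
            ((fun s : ℝ => (fun _ : Fin n => t) + s • (fun _ : Fin n => (1:ℝ))) 0) := by
          simpa using hDGd
        have h1 := hF'.comp_hasDerivAt 0 hpath
        have h2 : HasDerivAt ((fderiv ℝ F) ∘ (fun s : ℝ => (fun _ : Fin n => t) + s • (fun _ : Fin n => (1:ℝ))))
            0 0 := by
          refine (hasDerivAt_const 0 (fderiv ℝ F (fun _ : Fin n => t))).congr_of_eventuallyEq ?_
          filter_upwards [isOpen_Ioi.mem_nhds (show (-t:ℝ) < 0 by linarith)] with s hs
          have hts : 0 < t + s := by simp only [Set.mem_Ioi] at hs; linarith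
          have hxe : (fun _ : Fin n => t) + s • (fun _ : Fin n => (1:ℝ))
              = (t + s) • (fun _ : Fin n => (1:ℝ)) := by
            funext k; simp
          show (fderiv ℝ F) ((fun _ : Fin n => t) + s • (fun _ : Fin n => (1:ℝ)))
              = fderiv ℝ F (fun _ : Fin n => t)
          rw [hxe, hhom0 _ hone (t+s) hts, hxs, hhom0 _ hone t ht]
        have h3 := h1.unique h2
        exact h3
      have hsymm2 : ∀ v w : Fin n → ℝ, fderiv ℝ (fderiv ℝ F) (fun _ : Fin n => t) v w
          = fderiv ℝ (fderiv ℝ F) (fun _ : Fin n => t) w v := by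
        have hev : ∀ᶠ y in nhds (fun _ : Fin n => t), HasFDerivAt F (fderiv ℝ F y) y := by
          filter_upwards [hopen.mem_nhds hx] with y hy
          exact (hdiff y hy).hasFDerivAt
        exact second_derivative_symmetric_of_eventually hev hDGd
      have hkey2 : ∀ v : Fin n → ℝ,
          fderiv ℝ (fderiv ℝ F) (fun _ : Fin n => t) v (fun _ : Fin n => (1:ℝ)) = 0 := by
        intro v
        rw [hsymm2 v (fun _ : Fin n => (1:ℝ)), hkey]
        rfl
      have hφfun : φ = fun κ => fderiv ℝ F κ (fun _ => 1) * (∑ i, κ i ^ 2) - F κ * (∑ i, κ i) := by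
        funext κ; rw [hφ, hS]
      have hSd : HasFDerivAt (fun κ : Fin n → ℝ => fderiv ℝ F κ (fun _ => 1))
          ((ContinuousLinearMap.apply ℝ ℝ (fun _ : Fin n => (1:ℝ))).comp
            (fderiv ℝ (fderiv ℝ F) (fun _ : Fin n => t))) (fun _ : Fin n => t) :=
        (ContinuousLinearMap.apply ℝ ℝ (fun _ : Fin n => (1:ℝ))).hasFDerivAt.comp _ hDGd
      have hQd : HasFDerivAt (fun κ : Fin n → ℝ => ∑ i, κ i ^ 2)
          (∑ i : Fin n, (2 * t) • (ContinuousLinearMap.proj i : (Fin n → ℝ) →L[ℝ] ℝ))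
          (fun _ : Fin n => t) := by
        refine HasFDerivAt.fun_sum fun i _ => ?_
        have hp : HasFDerivAt (fun κ : Fin n → ℝ => κ i)
            (ContinuousLinearMap.proj i : (Fin n → ℝ) →L[ℝ] ℝ) (fun _ : Fin n => t) :=
          (ContinuousLinearMap.proj i : (Fin n → ℝ) →L[ℝ] ℝ).hasFDerivAt
        have hm := hp.fun_mul hp
        have : (fun κ : Fin n → ℝ => κ i ^ 2) = fun κ => κ i * κ i := by
          funext κ; ring
        rw [this]
        rw [two_mul, add_smul]
        exact hm
      have hPd : HasFDerivAt (fun κ : Fin n → ℝ => ∑ i, κ i)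
          (∑ i : Fin n, (ContinuousLinearMap.proj i : (Fin n → ℝ) →L[ℝ] ℝ))
          (fun _ : Fin n => t) :=
        HasFDerivAt.fun_sum fun i _ => (ContinuousLinearMap.proj i : (Fin n → ℝ) →L[ℝ] ℝ).hasFDerivAt
      have hFd' : HasFDerivAt F (fderiv ℝ F (fun _ : Fin n => t)) (fun _ : Fin n => t) :=
        (hdiff _ hx).hasFDerivAt
      have hphi := ((hSd.fun_mul hQd).fun_sub (hFd'.fun_mul hPd))
      rw [← hφfun] at hphi
      rw [hphi.fderiv]
      ext v
      simp only [ContinuousLinearMap.sub_apply, ContinuousLinearMap.add_apply,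
        ContinuousLinearMap.smul_apply, ContinuousLinearMap.coe_sum', Finset.sum_apply,
        ContinuousLinearMap.proj_apply, ContinuousLinearMap.comp_apply,
        ContinuousLinearMap.apply_apply, ContinuousLinearMap.zero_apply, smul_eq_mul]
      rw [hkey2, hGx1, hGxv, hFx]
      simp only [Finset.sum_const, Finset.card_univ, Fintype.card_fin, nsmul_eq_mul, mul_zero]
      rw [← Finset.mul_sum]
      linear_combination (-(t * (∑ i, v i))) * hcn
  · intro K hK hKΓ
    obtain ⟨A, hA⟩ := hK.exists_bound_of_continuousOn (hGcont.mono hKΓ)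
    obtain ⟨B, hB⟩ := hK.exists_bound_of_continuousOn (continuousOn_id (s := K))
    set S : Set (Fin n → ℝ) := ⋃ σ : Equiv.Perm (Fin n),
      (fun p : (Fin n → ℝ) × ℝ => p.2 • (p.1 ∘ σ) + (1 - p.2) • p.1) '' (K ×ˢ Set.Icc (0:ℝ) 1)
      with hSdef
    have hScomp : IsCompact S := by
      refine isCompact_iUnion fun σ => (hK.prod isCompact_Icc).image ?_
      fun_prop
    have hSsub : S ⊆ Γ := by
      rintro x hx
      simp only [hSdef, Set.mem_iUnion, Set.mem_image, Set.mem_prod] at hx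
      obtain ⟨σ, ⟨κ, s⟩, ⟨hκ, hs⟩, rfl⟩ := hx
      exact hconv (hperm_mem κ (hKΓ hκ) σ) (hKΓ hκ) hs.1 (by simp; linarith [hs.2]) (by ring)
    obtain ⟨M0, hM0⟩ := hScomp.exists_bound_of_continuousOn (f := fderiv ℝ (fderiv ℝ F)) (hG2cont.mono hSsub)
    set A1 : ℝ := max A 0 with hA1def
    set B1 : ℝ := max B 0 with hB1def
    set M1 : ℝ := max M0 0 with hM1def
    have hA1 : ∀ κ ∈ K, ‖fderiv ℝ F κ‖ ≤ A1 := fun κ h => (hA κ h).trans (le_max_left _ _)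
    have hB1 : ∀ κ ∈ K, ‖κ‖ ≤ B1 := fun κ h => (hB κ h).trans (le_max_left _ _)
    have hM1 : ∀ x ∈ S, ‖fderiv ℝ (fderiv ℝ F) x‖ ≤ M1 := fun x h =>
      (hM0 x h).trans (le_max_left _ _)
    have hA1n : 0 ≤ A1 := le_max_right _ _
    have hB1n : 0 ≤ B1 := le_max_right _ _
    have hM1n : 0 ≤ M1 := le_max_right _ _
    have hsingle_norm : ∀ i : Fin n, ‖(Pi.single i 1 : Fin n → ℝ)‖ = 1 := by
      intro i
      rw [Pi.norm_single]
      exact norm_one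
    -- Lipschitz-type bound on differences of partial derivatives
    have hLip : ∀ κ ∈ K, ∀ i j : Fin n,
        |fderiv ℝ F κ (Pi.single i 1) - fderiv ℝ F κ (Pi.single j 1)|
          ≤ (2 * M1) * |κ i - κ j| := by
      intro κ hκ i j
      set σ : Equiv.Perm (Fin n) := Equiv.swap i j with hσdef
      set g : (Fin n → ℝ) → ℝ :=
        fun x => fderiv ℝ F x (Pi.single i 1) - fderiv ℝ F x (Pi.single j 1) with hgdef
      have hseg : segment ℝ κ (κ ∘ σ) ⊆ S := by
        intro x hx
        obtain ⟨a, b, ha, hb, hab, rfl⟩ := hx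
        simp only [hSdef, Set.mem_iUnion, Set.mem_image, Set.mem_prod]
        refine ⟨σ, (κ, b), ⟨hκ, ⟨hb, by linarith⟩⟩, ?_⟩
        rw [show (1:ℝ) - b = a by linarith]
        abel
      have hsegΓ : segment ℝ κ (κ ∘ σ) ⊆ Γ := hseg.trans hSsub
      have hgd : ∀ x ∈ segment ℝ κ (κ ∘ σ),
          HasFDerivAt g
            (((ContinuousLinearMap.apply ℝ ℝ ((Pi.single i 1 : Fin n → ℝ))).comp
                (fderiv ℝ (fderiv ℝ F) x))
              - ((ContinuousLinearMap.apply ℝ ℝ ((Pi.single j 1 : Fin n → ℝ))).comp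
                (fderiv ℝ (fderiv ℝ F) x))) x := by
        intro x hx
        have d1 : HasFDerivAt (fun y : Fin n → ℝ => fderiv ℝ F y (Pi.single i 1))
            ((ContinuousLinearMap.apply ℝ ℝ ((Pi.single i 1 : Fin n → ℝ))).comp
              (fderiv ℝ (fderiv ℝ F) x)) x :=
          (ContinuousLinearMap.apply ℝ ℝ ((Pi.single i 1 : Fin n → ℝ))).hasFDerivAt.comp x
            (hGdiff x (hsegΓ hx)).hasFDerivAt
        have d2 : HasFDerivAt (fun y : Fin n → ℝ => fderiv ℝ F y (Pi.single j 1))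
            ((ContinuousLinearMap.apply ℝ ℝ ((Pi.single j 1 : Fin n → ℝ))).comp
              (fderiv ℝ (fderiv ℝ F) x)) x :=
          (ContinuousLinearMap.apply ℝ ℝ ((Pi.single j 1 : Fin n → ℝ))).hasFDerivAt.comp x
            (hGdiff x (hsegΓ hx)).hasFDerivAt
        exact d1.sub d2
      have hgdiff : ∀ x ∈ segment ℝ κ (κ ∘ σ), DifferentiableAt ℝ g x :=
        fun x hx => (hgd x hx).differentiableAt
      have hgbound : ∀ x ∈ segment ℝ κ (κ ∘ σ), ‖fderiv ℝ g x‖ ≤ 2 * M1 := by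
        intro x hx
        rw [(hgd x hx).fderiv]
        refine ContinuousLinearMap.opNorm_le_bound _ (by positivity) fun v => ?_
        have hv1 : ‖fderiv ℝ (fderiv ℝ F) x v (Pi.single i 1)‖
            ≤ ‖fderiv ℝ (fderiv ℝ F) x v‖ := by
          calc ‖fderiv ℝ (fderiv ℝ F) x v (Pi.single i 1)‖
              ≤ ‖fderiv ℝ (fderiv ℝ F) x v‖ * ‖(Pi.single i 1 : Fin n → ℝ)‖ :=
                (fderiv ℝ (fderiv ℝ F) x v).le_opNorm _
            _ = ‖fderiv ℝ (fderiv ℝ F) x v‖ := by rw [hsingle_norm i, mul_one]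
        have hv2 : ‖fderiv ℝ (fderiv ℝ F) x v (Pi.single j 1)‖
            ≤ ‖fderiv ℝ (fderiv ℝ F) x v‖ := by
          calc ‖fderiv ℝ (fderiv ℝ F) x v (Pi.single j 1)‖
              ≤ ‖fderiv ℝ (fderiv ℝ F) x v‖ * ‖(Pi.single j 1 : Fin n → ℝ)‖ :=
                (fderiv ℝ (fderiv ℝ F) x v).le_opNorm _
            _ = ‖fderiv ℝ (fderiv ℝ F) x v‖ := by rw [hsingle_norm j, mul_one]
        have hvop : ‖fderiv ℝ (fderiv ℝ F) x v‖
            ≤ M1 * ‖v‖ := by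
          calc ‖fderiv ℝ (fderiv ℝ F) x v‖
              ≤ ‖fderiv ℝ (fderiv ℝ F) x‖ * ‖v‖ := (fderiv ℝ (fderiv ℝ F) x).le_opNorm v
            _ ≤ M1 * ‖v‖ := mul_le_mul_of_nonneg_right (hM1 x (hseg hx)) (norm_nonneg v)
        calc ‖((((ContinuousLinearMap.apply ℝ ℝ ((Pi.single i 1 : Fin n → ℝ))).comp
                (fderiv ℝ (fderiv ℝ F) x))
              - ((ContinuousLinearMap.apply ℝ ℝ ((Pi.single j 1 : Fin n → ℝ))).comp
                (fderiv ℝ (fderiv ℝ F) x)))) v‖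
            = ‖fderiv ℝ (fderiv ℝ F) x v (Pi.single i 1)
                - fderiv ℝ (fderiv ℝ F) x v (Pi.single j 1)‖ := by
              simp only [ContinuousLinearMap.sub_apply, ContinuousLinearMap.comp_apply,
                ContinuousLinearMap.apply_apply]
          _ ≤ ‖fderiv ℝ (fderiv ℝ F) x v (Pi.single i 1)‖
                + ‖fderiv ℝ (fderiv ℝ F) x v (Pi.single j 1)‖ := norm_sub_le _ _
          _ ≤ M1 * ‖v‖ + M1 * ‖v‖ := add_le_add (hv1.trans hvop) (hv2.trans hvop)
          _ = 2 * M1 * ‖v‖ := by ring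
      have hmvt := Convex.norm_image_sub_le_of_norm_fderiv_le hgdiff hgbound
        (convex_segment _ _) (left_mem_segment ℝ κ (κ ∘ σ)) (right_mem_segment ℝ κ (κ ∘ σ))
      have hanti : g (κ ∘ σ) = - g κ := by
        have h1 := hperm' κ (hKΓ hκ) σ i
        have h2 := hperm' κ (hKΓ hκ) σ j
        rw [show σ.symm i = j by rw [hσdef]; simp] at h1
        rw [show σ.symm j = i by rw [hσdef]; simp [Equiv.swap_apply_right]] at h2
        rw [hgdef]
        simp only
        rw [← h1, ← h2]
        ring
      have hnrm : ‖κ ∘ σ - κ‖ ≤ |κ i - κ j| := by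
        rw [pi_norm_le_iff_of_nonneg (abs_nonneg _)]
        intro k
        rcases eq_or_ne k i with rfl | hki
        · simp only [Pi.sub_apply, Function.comp_apply, hσdef, Equiv.swap_apply_left,
            Real.norm_eq_abs]
          rw [abs_sub_comm]
        · rcases eq_or_ne k j with rfl | hkj
          · simp only [Pi.sub_apply, Function.comp_apply, hσdef, Equiv.swap_apply_right,
              Real.norm_eq_abs]
            exact le_rfl
          · simp only [Pi.sub_apply, Function.comp_apply, hσdef,
              Equiv.swap_apply_of_ne_of_ne hki hkj, sub_self, norm_zero]
            exact abs_nonneg _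
      have h2g : 2 * |g κ| ≤ 2 * M1 * |κ i - κ j| := by
        have := hmvt
        rw [hanti] at this
        have heq2 : ‖-g κ - g κ‖ = 2 * |g κ| := by
          rw [show -g κ - g κ = -(2 * g κ) by ring, norm_neg, Real.norm_eq_abs, abs_mul]
          simp
        rw [heq2] at this
        calc 2 * |g κ| ≤ 2 * M1 * ‖κ ∘ σ - κ‖ := this
          _ ≤ 2 * M1 * |κ i - κ j| :=
            mul_le_mul_of_nonneg_left hnrm (by positivity)
      have : |g κ| ≤ M1 * |κ i - κ j| := by linarith
      calc |g κ| ≤ M1 * |κ i - κ j| := this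
        _ ≤ 2 * M1 * |κ i - κ j| := by linarith [mul_nonneg hM1n (abs_nonneg (κ i - κ j))]
    -- algebraic identity for φ
    have heq : ∀ κ ∈ K, φ κ = ∑ i, ∑ j ∈ Finset.univ.filter (fun j => i < j),
        (fderiv ℝ F κ (Pi.single i 1) * κ j * (κ j - κ i)
          + fderiv ℝ F κ (Pi.single j 1) * κ i * (κ i - κ j)) := by
      intro κ hκ
      have hFκ : F κ = ∑ i, κ i * fderiv ℝ F κ (Pi.single i 1) := by
        rw [← happly κ κ, heuler κ (hKΓ hκ)]
      have hdouble : φ κ = ∑ i, ∑ j,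
          (fderiv ℝ F κ (Pi.single i 1) * κ j * (κ j - κ i)) := by
        rw [hφ, hFκ, Finset.sum_mul_sum, Finset.sum_mul_sum, ← Finset.sum_sub_distrib]
        refine Finset.sum_congr rfl fun i _ => ?_
        rw [← Finset.sum_sub_distrib]
        exact Finset.sum_congr rfl fun j _ => by ring
      rw [hdouble, dvqb_pair_split _ (fun i => by ring)]
    -- final bound
    refine ⟨A1 + 2 * B1 * M1 + 1, by positivity, fun κ hκ => ?_⟩
    rw [heq κ hκ, Finset.mul_sum]
    refine Finset.sum_le_sum fun i _ => ?_
    rw [Finset.mul_sum]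
    refine Finset.sum_le_sum fun j _ => ?_
    set f1 : ℝ := fderiv ℝ F κ (Pi.single i 1) with hf1
    set f2 : ℝ := fderiv ℝ F κ (Pi.single j 1) with hf2
    have hident : f1 * κ j * (κ j - κ i) + f2 * κ i * (κ i - κ j)
        = f1 * (κ i - κ j)^2 + (κ i * (f1 - f2)) * (κ j - κ i) := by ring
    have hbf1 : f1 ≤ A1 := by
      calc f1 ≤ |f1| := le_abs_self _
        _ = ‖fderiv ℝ F κ (Pi.single i 1)‖ := by rw [hf1, Real.norm_eq_abs]
        _ ≤ ‖fderiv ℝ F κ‖ * ‖(Pi.single i 1 : Fin n → ℝ)‖ := (fderiv ℝ F κ).le_opNorm _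
        _ = ‖fderiv ℝ F κ‖ := by rw [hsingle_norm i, mul_one]
        _ ≤ A1 := hA1 κ hκ
    have hbκ : |κ i| ≤ B1 := by
      calc |κ i| = ‖κ i‖ := (Real.norm_eq_abs _).symm
        _ ≤ ‖κ‖ := norm_le_pi_norm κ i
        _ ≤ B1 := hB1 κ hκ
    have h1 : f1 * (κ i - κ j)^2 ≤ A1 * (κ i - κ j)^2 :=
      mul_le_mul_of_nonneg_right hbf1 (sq_nonneg _)
    have h2 : (κ i * (f1 - f2)) * (κ j - κ i) ≤ (2 * B1 * M1) * (κ i - κ j)^2 := by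
      calc (κ i * (f1 - f2)) * (κ j - κ i) ≤ |(κ i * (f1 - f2)) * (κ j - κ i)| := le_abs_self _
        _ = |κ i| * |f1 - f2| * |κ j - κ i| := by rw [abs_mul, abs_mul]
        _ ≤ B1 * ((2 * M1) * |κ i - κ j|) * |κ j - κ i| := by
            refine mul_le_mul_of_nonneg_right ?_ (abs_nonneg _)
            exact mul_le_mul hbκ (hLip κ hκ i j) (abs_nonneg _) hB1n
        _ = (2 * B1 * M1) * (|κ i - κ j| * |κ i - κ j|) := by rw [abs_sub_comm (κ j) (κ i)]; ring
        _ = (2 * B1 * M1) * (κ i - κ j)^2 := by rw [← abs_mul, ← sq, abs_of_nonneg (sq_nonneg _)]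
    calc f1 * κ j * (κ j - κ i) + f2 * κ i * (κ i - κ j)
        = f1 * (κ i - κ j)^2 + (κ i * (f1 - f2)) * (κ j - κ i) := hident
      _ ≤ A1 * (κ i - κ j)^2 + (2 * B1 * M1) * (κ i - κ j)^2 := add_le_add h1 h2
      _ ≤ (A1 + 2 * B1 * M1 + 1) * (κ i - κ j)^2 := by nlinarith [sq_nonneg (κ i - κ j)]
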